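/- arXiv:0907.3984 — 4 statements merged into one kernel-verified Lean document; each statement's English description precedes it below -/
import Mathlib

section
/- Let 𝔄 be an amenable Banach algebra and let e ∈ 𝔄 be an idempotent. Then for every ε > 0 and every finite subset F of e𝔄e there exist finitely many elements a₁, b₁, …, a_r, b_r ∈ 𝔄 such that ∑_{k=1}^r a_k b_k = e and ‖∑_{k=1}^r (x a_k ⊗ b_k − a_k ⊗ b_k x)‖_{𝔄 ⊗̂ 𝔄} < ε for all x ∈ F. -/
open scoped TensorProduct

variable (A : Type*) [NonUnitalNormedRing A] [NormedSpace ℂ A]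
  [IsScalarTower ℂ A A] [SMulCommClass ℂ A A]

/-- The multiplication of `A ⊗ Aᵒᵖ` on the algebraic tensor product:
`(a ⊗ b) • (c ⊗ d) = (a * c) ⊗ (d * b)`. -/
noncomputable def opMul : (A ⊗[ℂ] A) →ₗ[ℂ] (A ⊗[ℂ] A) →ₗ[ℂ] (A ⊗[ℂ] A) :=
  TensorProduct.lift <|
    LinearMap.compl₂
      ((TensorProduct.mapBilinear (RingHom.id ℂ) A A A A).comp (LinearMap.mul ℂ A))
      ((LinearMap.mul ℂ A).flip)

/-- The projective tensor norm of an element of the algebraic tensor product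
`A ⊗ A`: the infimum of `∑ ‖aₖ‖ ‖bₖ‖` over all representations `∑ aₖ ⊗ bₖ`. -/
noncomputable def projNorm (u : A ⊗[ℂ] A) : ℝ :=
  sInf { c : ℝ | ∃ l : List (A × A),
    (l.map fun p => p.1 ⊗ₜ[ℂ] p.2).sum = u ∧ (l.map fun p => ‖p.1‖ * ‖p.2‖).sum = c }

/-- Amenability of the Banach algebra `A`, following Helemskiĭ's
characterization: `A` has a bounded approximate identity, and the left ideal
`ker Δ` of `A ⊗̂ Aᵒᵖ` has a bounded right approximate identity. -/
def IsAmenable : Prop :=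
  (∃ C > (0 : ℝ), ∀ ε > (0 : ℝ), ∀ S : Finset A, ∃ e : A, ‖e‖ ≤ C ∧
      ∀ x ∈ S, ‖e * x - x‖ < ε ∧ ‖x * e - x‖ < ε) ∧
  (∃ C > (0 : ℝ), ∀ ε > (0 : ℝ), ∀ S : Finset (A ⊗[ℂ] A),
      (∀ u ∈ S, u ∈ LinearMap.ker (LinearMap.mul' ℂ A)) →
      ∃ r ∈ LinearMap.ker (LinearMap.mul' ℂ A), projNorm A r ≤ C ∧
        ∀ u ∈ S, projNorm A (opMul A u r - u) < ε)

lemma opMul_tmul (a b c d : A) :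
    opMul A (a ⊗ₜ[ℂ] b) (c ⊗ₜ[ℂ] d) = (a*c) ⊗ₜ[ℂ] (d*b) := by
  simp [opMul, TensorProduct.mapBilinear]

lemma mul'_opMul (a b : A) (v : A ⊗[ℂ] A) :
    LinearMap.mul' ℂ A (opMul A (a ⊗ₜ[ℂ] b) v)
      = a * LinearMap.mul' ℂ A v * b := by
  induction v using TensorProduct.induction_on with
  | zero => simp
  | tmul c d => simp [opMul_tmul, mul_assoc]
  | add u v hu hv => simp [map_add, hu, hv, mul_add, add_mul]

/-- left multiplication by `x` on the first factor -/
noncomputable def lmulT (x : A) : (A ⊗[ℂ] A) →ₗ[ℂ] (A ⊗[ℂ] A) :=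
  TensorProduct.map (LinearMap.mulLeft ℂ x) LinearMap.id

/-- right multiplication by `x` on the second factor -/
noncomputable def rmulT (x : A) : (A ⊗[ℂ] A) →ₗ[ℂ] (A ⊗[ℂ] A) :=
  TensorProduct.map LinearMap.id (LinearMap.mulRight ℂ x)

lemma opMul_left (x e : A) (hx : x * e = x) (v : A ⊗[ℂ] A) :
    opMul A (x ⊗ₜ[ℂ] e) v = lmulT A x (opMul A (e ⊗ₜ[ℂ] e) v) := by
  induction v using TensorProduct.induction_on with
  | zero => simp
  | tmul c d =>
      simp only [opMul_tmul, lmulT, TensorProduct.map_tmul, LinearMap.mulLeft_apply,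
        LinearMap.id_coe, id_eq, ← mul_assoc, hx]
  | add u v hu hv => simp [map_add, hu, hv]

lemma opMul_right (x e : A) (hx : e * x = x) (v : A ⊗[ℂ] A) :
    opMul A (e ⊗ₜ[ℂ] x) v = rmulT A x (opMul A (e ⊗ₜ[ℂ] e) v) := by
  induction v using TensorProduct.induction_on with
  | zero => simp
  | tmul c d =>
      simp only [opMul_tmul, rmulT, TensorProduct.map_tmul, LinearMap.mulRight_apply,
        LinearMap.id_coe, id_eq, mul_assoc, hx]
  | add u v hu hv => simp [map_add, hu, hv]

omit [NonUnitalNormedRing A] [NormedSpace ℂ A] [IsScalarTower ℂ A A] [SMulCommClass ℂ A A] in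
lemma sum_fin {β : Type*} [AddCommMonoid β] (s : Finset (A × A)) (f : A × A → β) :
    ∑ k : Fin s.card, f ((s.equivFin.symm k : s) : A × A) = ∑ p ∈ s, f p := by
  rw [Equiv.sum_comp s.equivFin.symm (fun i : s => f i), Finset.sum_coe_sort s f]


/-- If `A` is an amenable Banach algebra and `e ∈ A` is an
idempotent, then for every `ε > 0` and every finite subset `F` of `eAe` there
are `a₁, b₁, …, a_r, b_r ∈ A` with `∑ aₖ bₖ = e` and
`‖∑ (x aₖ ⊗ bₖ − aₖ ⊗ bₖ x)‖ < ε` in the projective norm, for all `x ∈ F`. -/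
theorem amenable_diagonal [CompleteSpace A] (hA : IsAmenable A)
    (e : A) (he : e * e = e) (ε : ℝ) (hε : 0 < ε) (F : Finset A)
    (hF : ∀ x ∈ F, ∃ y : A, x = e * y * e) :
    ∃ (r : ℕ) (a b : Fin r → A),
      (∑ k, a k * b k = e) ∧
      ∀ x ∈ F,
        projNorm A (∑ k, ((x * a k) ⊗ₜ[ℂ] b k - a k ⊗ₜ[ℂ] (b k * x))) < ε := by
  classical
  obtain ⟨-, C, hC, hbai⟩ := hA
  have hxe : ∀ x ∈ F, x * e = x ∧ e * x = x := by
    intro x hx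
    obtain ⟨y, rfl⟩ := hF x hx
    constructor
    · rw [mul_assoc, he]
    · rw [← mul_assoc, ← mul_assoc, he]
  set S : Finset (A ⊗[ℂ] A) := F.image (fun x => e ⊗ₜ[ℂ] x - x ⊗ₜ[ℂ] e) with hS
  have hSker : ∀ u ∈ S, u ∈ LinearMap.ker (LinearMap.mul' ℂ A) := by
    intro u hu
    rw [hS] at hu
    obtain ⟨x, hx, rfl⟩ := Finset.mem_image.mp hu
    simp [LinearMap.mem_ker, (hxe x hx).1, (hxe x hx).2]
  obtain ⟨R, hRker, -, hR⟩ := hbai ε hε S hSker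
  set m : A ⊗[ℂ] A := e ⊗ₜ[ℂ] e - opMul A (e ⊗ₜ[ℂ] e) R with hm
  obtain ⟨s, hs⟩ := TensorProduct.exists_finset m
  set g : Fin s.card → A × A := fun k => ((s.equivFin.symm k : s) : A × A) with hg
  refine ⟨s.card, fun k => (g k).1, fun k => (g k).2, ?_, ?_⟩
  · show ∑ k : Fin s.card, (g k).1 * (g k).2 = e
    have hmm : LinearMap.mul' ℂ A m = e := by
      rw [hm, map_sub, mul'_opMul, LinearMap.mem_ker.mp hRker, mul_zero, zero_mul, sub_zero,
        LinearMap.mul'_apply, he]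
    have h2 : (∑ p ∈ s, p.1 * p.2) = e := by
      rw [← hmm, hs, map_sum]; simp [LinearMap.mul'_apply]
    exact (sum_fin A s fun p => p.1 * p.2).trans h2
  · intro x hx
    obtain ⟨hx1, hx2⟩ := hxe x hx
    show projNorm A
      (∑ k : Fin s.card, ((x * (g k).1) ⊗ₜ[ℂ] (g k).2 - (g k).1 ⊗ₜ[ℂ] ((g k).2 * x))) < ε
    have key : (∑ k : Fin s.card,
          ((x * (g k).1) ⊗ₜ[ℂ] (g k).2 - (g k).1 ⊗ₜ[ℂ] ((g k).2 * x)))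
        = opMul A (e ⊗ₜ[ℂ] x - x ⊗ₜ[ℂ] e) R - (e ⊗ₜ[ℂ] x - x ⊗ₜ[ℂ] e) := by
      have h1 : (∑ k : Fin s.card,
            ((x * (g k).1) ⊗ₜ[ℂ] (g k).2 - (g k).1 ⊗ₜ[ℂ] ((g k).2 * x)))
          = lmulT A x m - rmulT A x m := by
        refine (sum_fin A s fun p : A × A => (x * p.1) ⊗ₜ[ℂ] p.2 - p.1 ⊗ₜ[ℂ] (p.2 * x)).trans ?_
        rw [hs, map_sum, map_sum, ← Finset.sum_sub_distrib]
        refine Finset.sum_congr rfl fun p _ => ?_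
        simp [lmulT, rmulT]
      have hLw : lmulT A x (e ⊗ₜ[ℂ] e) = x ⊗ₜ[ℂ] e := by simp [lmulT, hx1]
      have hRw : rmulT A x (e ⊗ₜ[ℂ] e) = e ⊗ₜ[ℂ] x := by simp [rmulT, hx2]
      rw [h1, hm]
      simp only [map_sub, LinearMap.sub_apply, hLw, hRw,
        ← opMul_left A x e hx1 R, ← opMul_right A x e hx2 R]
      abel
    rw [key]
    refine hR _ ?_
    rw [hS]
    exact Finset.mem_image_of_mem _ hx
end

section
/- Let q ∈ (1, ∞). There is a constant C_q > 0 such that the q-summing norm of the identity operator on the N-dimensional Hilbert space ℓ²_N satisfies π_q(id_{ℓ²_N}) ≤ C_q √N for all N ∈ ℕ. -/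
open Finset

noncomputable def sgn (b : Bool) : ℝ := if b then 1 else -1

noncomputable def Ssum {N : ℕ} (a : Fin N → ℂ) (s : Fin N → Bool) : ℂ :=
  ∑ k, (sgn (s k) : ℂ) * a k

lemma sum_pi_succ {N : ℕ} {M : Type*} [AddCommMonoid M] (F : (Fin (N + 1) → Bool) → M) :
    ∑ s, F s = ∑ b : Bool, ∑ t : Fin N → Bool, F (Fin.cons b t) := by
  rw [← (Fin.consEquiv (fun _ => Bool)).sum_comp F, Fintype.sum_prod_type]
  rfl

lemma Ssum_cons {N : ℕ} (a : Fin (N + 1) → ℂ) (b : Bool) (t : Fin N → Bool) :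
    Ssum a (Fin.cons b t) = (sgn b : ℂ) * a 0 + Ssum (fun k => a k.succ) t := by
  simp [Ssum, Fin.sum_univ_succ]

lemma sumA {N : ℕ} (a : Fin N → ℂ) :
    ∑ s : Fin N → Bool, Complex.normSq (Ssum a s) = 2 ^ N * ∑ k, Complex.normSq (a k) := by
  induction N with
  | zero => simp [Ssum]
  | succ N ih =>
    rw [sum_pi_succ (fun s => Complex.normSq (Ssum a s))]
    have key : ∀ t : Fin N → Bool,
        ∑ b : Bool, Complex.normSq (Ssum a (Fin.cons b t)) =
          2 * Complex.normSq (Ssum (fun k => a k.succ) t) + 2 * Complex.normSq (a 0) := by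
      intro t
      rw [Fintype.sum_bool, Ssum_cons, Ssum_cons]
      simp only [sgn, Bool.false_eq_true, if_true, if_false, Complex.ofReal_one,
        Complex.ofReal_neg, one_mul, neg_one_mul, neg_mul, ite_true, ite_false]
      simp only [Complex.normSq_apply, Complex.add_re, Complex.add_im, Complex.neg_re,
        Complex.neg_im]
      ring
    rw [Finset.sum_comm, Finset.sum_congr rfl (fun t _ => key t), Finset.sum_add_distrib,
      ← Finset.mul_sum, ih, Finset.sum_const, Fin.sum_univ_succ]
    simp [Finset.card_univ, mul_comm]
    ring

lemma pointwise4 (z w : ℂ) :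
    Complex.normSq (z + w) ^ 2 + Complex.normSq (-z + w) ^ 2 ≤
      2 * Complex.normSq w ^ 2 + 12 * Complex.normSq w * Complex.normSq z +
        2 * Complex.normSq z ^ 2 := by
  simp only [Complex.normSq_apply, Complex.add_re, Complex.add_im, Complex.neg_re,
    Complex.neg_im]
  nlinarith [sq_nonneg (w.re * z.im - w.im * z.re), sq_nonneg (w.re * z.re + w.im * z.im)]

lemma sumB {N : ℕ} (a : Fin N → ℂ) :
    ∑ s : Fin N → Bool, Complex.normSq (Ssum a s) ^ 2 ≤
      3 * 2 ^ N * (∑ k, Complex.normSq (a k)) ^ 2 := by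
  induction N with
  | zero => simp [Ssum]
  | succ N ih =>
    rw [sum_pi_succ (fun s => Complex.normSq (Ssum a s) ^ 2)]
    set T : (Fin N → Bool) → ℂ := fun t => Ssum (fun k => a k.succ) t with hT
    have key : ∀ t : Fin N → Bool,
        ∑ b : Bool, Complex.normSq (Ssum a (Fin.cons b t)) ^ 2 ≤
          2 * Complex.normSq (T t) ^ 2 +
            12 * Complex.normSq (T t) * Complex.normSq (a 0) +
            2 * Complex.normSq (a 0) ^ 2 := by
      intro t
      rw [Fintype.sum_bool, Ssum_cons, Ssum_cons]
      have := pointwise4 (a 0) (T t)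
      simp only [sgn, Bool.false_eq_true, ite_true, ite_false, Complex.ofReal_one,
        Complex.ofReal_neg, one_mul, neg_one_mul, neg_mul]
      convert this using 3 <;> ring
    rw [Finset.sum_comm]
    have h1 : ∑ t : Fin N → Bool, ∑ b : Bool, Complex.normSq (Ssum a (Fin.cons b t)) ^ 2 ≤
        ∑ t : Fin N → Bool, (2 * Complex.normSq (T t) ^ 2 +
          12 * Complex.normSq (T t) * Complex.normSq (a 0) +
          2 * Complex.normSq (a 0) ^ 2) := Finset.sum_le_sum fun t _ => key t
    refine h1.trans ?_
    have hA := sumA (fun k => a k.succ)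
    have hB := ih (fun k => a k.succ)
    rw [Finset.sum_add_distrib, Finset.sum_add_distrib, ← Finset.mul_sum, ← Finset.sum_mul,
      ← Finset.mul_sum, Finset.sum_const, Finset.card_univ]
    simp only [Fintype.card_fun, Fintype.card_bool, Fintype.card_fin, nsmul_eq_mul]
    rw [Fin.sum_univ_succ]
    set v := Complex.normSq (a 0) with hv
    set s2 := ∑ k : Fin N, Complex.normSq (a k.succ) with hs2
    have hv0 : 0 ≤ v := Complex.normSq_nonneg _
    have hs20 : 0 ≤ s2 := Finset.sum_nonneg fun k _ => Complex.normSq_nonneg _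
    have hTB : ∑ t : Fin N → Bool, Complex.normSq (T t) ^ 2 ≤ 3 * 2 ^ N * s2 ^ 2 := hB
    have hTA : ∑ t : Fin N → Bool, Complex.normSq (T t) = 2 ^ N * s2 := hA
    rw [hTA]
    have h2 : (0:ℝ) < 2 ^ N := by positivity
    push_cast
    nlinarith [hTB, pow_succ (2:ℝ) N, mul_nonneg h2.le (sq_nonneg v),
      mul_nonneg h2.le (mul_nonneg hv0 hs20), mul_nonneg h2.le (sq_nonneg s2)]

/-- Pure-arithmetic interpolation step for `1/2 ≤ p < 1`. -/
lemma interp {X Y M σ p : ℝ} (hM : 0 < M) (hσ : 0 < σ) (hX : 0 ≤ X)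
    (hp : 1 / 2 ≤ p) (hp1 : p < 1) (hY : Y = 3 * M * σ ^ 2)
    (hH : M * σ ≤ X ^ (1 / (2 - p)) * Y ^ (1 - 1 / (2 - p))) :
    σ ^ p ≤ Real.sqrt 3 / M * X := by
  set P : ℝ := 2 - p with hP
  have hP1 : 1 < P := by simp [hP]; linarith
  have hP0 : 0 < P := by linarith
  have hY0 : 0 < Y := by rw [hY]; positivity
  -- raise Hölder bound to the power P
  have h2 : (M * σ) ^ P ≤ X * Y ^ (P - 1) := by
    have := Real.rpow_le_rpow (by positivity) hH hP0.le
    calc (M * σ) ^ P ≤ (X ^ (1 / P) * Y ^ (1 - 1 / P)) ^ P := this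
      _ = X * Y ^ (P - 1) := by
          rw [Real.mul_rpow (by positivity) (by positivity),
            ← Real.rpow_mul hX, ← Real.rpow_mul hY0.le, one_div_mul_cancel hP0.ne',
            Real.rpow_one, one_sub_div hP0.ne', div_mul_cancel₀ _ hP0.ne']
  -- expand Y ^ (P - 1)
  have hPm : 0 ≤ P - 1 := by linarith
  have h3 : Y ^ (P - 1) = 3 ^ (P - 1) * M ^ (P - 1) * (σ ^ (2:ℝ)) ^ (P - 1) := by
    rw [hY, Real.mul_rpow (by positivity) (by positivity),
      Real.mul_rpow (by norm_num) (by positivity), ← Real.rpow_natCast σ 2]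
    norm_num
  -- key inequality : M * σ ^ p * Y ^ (P-1) ≤ √3 * (M*σ) ^ P
  have h4 : M * σ ^ p * Y ^ (P - 1) ≤ Real.sqrt 3 * (M * σ) ^ P := by
    have e3 : (3:ℝ) ^ (P - 1) ≤ Real.sqrt 3 := by
      rw [Real.sqrt_eq_rpow]
      exact Real.rpow_le_rpow_of_exponent_le (by norm_num) (by simp [hP]; linarith)
    have eM : M * M ^ (P - 1) = M ^ P := by
      nth_rewrite 1 [← Real.rpow_one M]
      rw [← Real.rpow_add hM]; norm_num
    have eσ : σ ^ p * (σ ^ (2:ℝ)) ^ (P - 1) = σ ^ P := by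
      rw [← Real.rpow_mul hσ.le, ← Real.rpow_add hσ]
      ring_nf
      congr 1; rw [hP]; ring
    have eMσ : (M * σ) ^ P = M ^ P * σ ^ P := Real.mul_rpow hM.le hσ.le
    calc M * σ ^ p * Y ^ (P - 1)
        = (3 : ℝ) ^ (P - 1) * ((M * M ^ (P - 1)) * (σ ^ p * (σ ^ (2:ℝ)) ^ (P - 1))) := by
          rw [h3]; ring
      _ = (3 : ℝ) ^ (P - 1) * (M ^ P * σ ^ P) := by rw [eM, eσ]
      _ ≤ Real.sqrt 3 * (M * σ) ^ P := by
          rw [eMσ]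
          exact mul_le_mul_of_nonneg_right e3 (by positivity)
  -- conclude
  have hMσP : 0 < (M * σ) ^ P := Real.rpow_pos_of_pos (by positivity) _
  have hYP : 0 < Y ^ (P - 1) := Real.rpow_pos_of_pos hY0 _
  rw [div_mul_eq_mul_div, le_div_iff₀ hM, mul_comm]
  -- M * σ ^ p ≤ √3 * X
  have h5 : M * σ ^ p ≤ Real.sqrt 3 * (M * σ) ^ P / Y ^ (P - 1) := by
    rw [le_div_iff₀ hYP]; exact h4
  refine h5.trans ?_
  rw [div_le_iff₀ hYP]
  calc Real.sqrt 3 * (M * σ) ^ P ≤ Real.sqrt 3 * (X * Y ^ (P - 1)) := by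
        exact mul_le_mul_of_nonneg_left h2 (Real.sqrt_nonneg _)
    _ = Real.sqrt 3 * X * Y ^ (P - 1) := by ring

lemma khintchine {N : ℕ} {q : ℝ} (hq : 1 ≤ q) (a : Fin N → ℂ) :
    (∑ k, Complex.normSq (a k)) ^ (q / 2) ≤
      Real.sqrt 3 / 2 ^ N * ∑ s : Fin N → Bool, Complex.normSq (Ssum a s) ^ (q / 2) := by
  have hq0 : 0 < q := by linarith
  set σ : ℝ := ∑ k, Complex.normSq (a k) with hσdef
  have hσ0 : 0 ≤ σ := Finset.sum_nonneg fun k _ => Complex.normSq_nonneg _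
  set M : ℝ := 2 ^ N with hMdef
  have hM : (0:ℝ) < M := by positivity
  set u : (Fin N → Bool) → ℝ := fun s => Complex.normSq (Ssum a s) with hudef
  have hu0 : ∀ s, 0 ≤ u s := fun s => Complex.normSq_nonneg _
  have hA : ∑ s, u s = M * σ := sumA a
  have hB : ∑ s, u s ^ 2 ≤ 3 * M * σ ^ 2 := sumB a
  set X : ℝ := ∑ s : Fin N → Bool, u s ^ (q / 2) with hXdef
  have hX0 : 0 ≤ X := Finset.sum_nonneg fun s _ => Real.rpow_nonneg (hu0 s) _
  show σ ^ (q / 2) ≤ Real.sqrt 3 / M * X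
  rcases eq_or_lt_of_le hσ0 with hσz | hσp
  · rw [← hσz, Real.zero_rpow (by positivity : q / 2 ≠ 0)]
    positivity
  have hcard : (Fintype.card (Fin N → Bool) : ℝ) = M := by
    simp [Fintype.card_fun, hMdef]
  rcases le_or_gt 2 q with hq2 | hq2
  · -- q ≥ 2 : power mean inequality
    set p : ℝ := q / 2 with hpdef
    have hp1 : 1 ≤ p := by rw [hpdef]; linarith
    have h := Real.arith_mean_le_rpow_mean Finset.univ (fun _ => 1 / M) u
      (fun i _ => by positivity) (by
        rw [Finset.sum_const, Finset.card_univ, nsmul_eq_mul, hcard]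
        field_simp) (fun i _ => hu0 i) hp1
    have hLHS : ∑ s, (1 / M) * u s = σ := by
      rw [← Finset.mul_sum, hA]; field_simp
    have hRHS : ∑ s, (1 / M) * u s ^ p = (1 / M) * X := by
      rw [hXdef, Finset.mul_sum]
    rw [hLHS, hRHS] at h
    have h2 : σ ^ p ≤ (1 / M) * X := by
      have := Real.rpow_le_rpow hσ0 h (by positivity : (0:ℝ) ≤ p)
      rwa [← Real.rpow_mul (mul_nonneg (by positivity) hX0), one_div_mul_cancel
        (by positivity : p ≠ 0), Real.rpow_one] at this
    refine h2.trans ?_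
    have h13 : (1:ℝ) ≤ Real.sqrt 3 := by
      rw [show (1:ℝ) = Real.sqrt 1 by simp]
      exact Real.sqrt_le_sqrt (by norm_num)
    have : 1 / M ≤ Real.sqrt 3 / M := by gcongr
    exact mul_le_mul_of_nonneg_right this hX0
  · -- 1 ≤ q < 2 : Hölder interpolation
    set p : ℝ := q / 2 with hpdef
    have hp : 1 / 2 ≤ p := by rw [hpdef]; linarith
    have hp1 : p < 1 := by rw [hpdef]; linarith
    set P : ℝ := 2 - p with hPdef
    have hP1 : 1 < P := by rw [hPdef]; linarith
    have hP0 : 0 < P := by linarith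
    set Q : ℝ := P / (P - 1) with hQdef
    have hpq : Real.HolderConjugate P Q := Real.holderConjugate_iff.mpr ⟨hP1, by
      rw [hQdef]; field_simp; ring⟩
    have hf0 : ∀ s, (0:ℝ) ≤ u s ^ (p / P) := fun s => Real.rpow_nonneg (hu0 s) _
    have hg0 : ∀ s, (0:ℝ) ≤ u s ^ (2 * (P - 1) / P) := fun s => Real.rpow_nonneg (hu0 s) _
    have hH := Real.inner_le_Lp_mul_Lq_of_nonneg Finset.univ hpq
      (fun s _ => hf0 s) (fun s _ => hg0 s)
    -- identify the three sums
    have hsum1 : p / P + 2 * (P - 1) / P = 1 := by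
      rw [← add_div, div_eq_one_iff_eq hP0.ne', hPdef]; ring
    have e1 : ∀ s, u s ^ (p / P) * u s ^ (2 * (P - 1) / P) = u s := by
      intro s
      rw [← Real.rpow_add' (hu0 s) (by rw [hsum1]; norm_num), hsum1, Real.rpow_one]
    have e2 : ∀ s, (u s ^ (p / P)) ^ P = u s ^ p := by
      intro s
      rw [← Real.rpow_mul (hu0 s), div_mul_cancel₀ _ hP0.ne']
    have e3 : ∀ s, (u s ^ (2 * (P - 1) / P)) ^ Q = u s ^ (2:ℕ) := by
      intro s
      rw [← Real.rpow_mul (hu0 s), show 2 * (P - 1) / P * Q = ((2:ℕ):ℝ) by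
        have h1 : P - 1 ≠ 0 := by linarith
        rw [hQdef]; field_simp; norm_num, Real.rpow_natCast]
    rw [Finset.sum_congr rfl (fun s _ => e1 s), Finset.sum_congr rfl (fun s _ => e2 s),
      Finset.sum_congr rfl (fun s _ => e3 s), hA, ← hXdef] at hH
    have hQpos : 0 < Q := hpq.symm.pos
    have hs2nonneg : (0:ℝ) ≤ ∑ s, u s ^ (2:ℕ) :=
      Finset.sum_nonneg fun s _ => by positivity
    have hH2 : M * σ ≤ X ^ (1 / P) * (3 * M * σ ^ 2) ^ (1 / Q) := by
      refine hH.trans ?_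
      have h1 := Real.rpow_le_rpow hs2nonneg hB (by positivity : (0:ℝ) ≤ 1 / Q)
      exact mul_le_mul_of_nonneg_left h1 (Real.rpow_nonneg hX0 _)
    have hinv : 1 - 1 / P = 1 / Q := by
      have h := hpq.inv_add_inv_eq_one
      rw [one_div, one_div]; linarith
    refine interp hM hσp hX0 hp hp1 rfl ?_
    rw [← hPdef, hinv]
    exact hH2



/-- The "weak `q`-norm" of a finite family `x`: the supremum over functionals
`f` in the unit ball of `E*` of `(∑ᵢ |⟨xᵢ, f⟩|^q)^{1/q}`. -/
noncomputable def weakNorm (q : ℝ) {E : Type*} [NormedAddCommGroup E]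
    [NormedSpace ℂ E] {m : ℕ} (x : Fin m → E) : ℝ :=
  ⨆ f : {f : E →L[ℂ] ℂ // ‖f‖ ≤ 1},
    (∑ i, ‖(f : E →L[ℂ] ℂ) (x i)‖ ^ q) ^ (1 / q)

/-- The `q`-summing norm `π_q(T)` of a bounded operator `T : E → F`. -/
noncomputable def summingNorm (q : ℝ) {E F : Type*} [NormedAddCommGroup E]
    [NormedSpace ℂ E] [NormedAddCommGroup F] [NormedSpace ℂ F]
    (T : E →L[ℂ] F) : ℝ :=
  sInf { K : ℝ | 0 ≤ K ∧ ∀ (m : ℕ) (x : Fin m → E),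
    (∑ i, ‖T (x i)‖ ^ q) ^ (1 / q) ≤ K * weakNorm q x }

lemma weakNorm_bddAbove (q : ℝ) (hq0 : 0 < q) {E : Type*} [NormedAddCommGroup E]
    [NormedSpace ℂ E] {m : ℕ} (x : Fin m → E) :
    BddAbove (Set.range fun f : {f : E →L[ℂ] ℂ // ‖f‖ ≤ 1} =>
      (∑ i, ‖(f : E →L[ℂ] ℂ) (x i)‖ ^ q) ^ (1 / q)) := by
  refine ⟨(∑ i, ‖x i‖ ^ q) ^ (1 / q), ?_⟩
  rintro _ ⟨f, rfl⟩
  refine Real.rpow_le_rpow (Finset.sum_nonneg fun i _ => Real.rpow_nonneg (norm_nonneg _) _)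
    (Finset.sum_le_sum fun i _ => ?_) (by positivity)
  exact Real.rpow_le_rpow (norm_nonneg _)
    ((f.1.le_opNorm _).trans (mul_le_of_le_one_left (norm_nonneg _) f.2)) hq0.le

lemma le_weakNorm {q : ℝ} (hq0 : 0 < q) {E : Type*} [NormedAddCommGroup E]
    [NormedSpace ℂ E] {m : ℕ} (x : Fin m → E) (f : E →L[ℂ] ℂ) (hf : ‖f‖ ≤ 1) :
    (∑ i, ‖f (x i)‖ ^ q) ^ (1 / q) ≤ weakNorm q x :=
  le_ciSup (weakNorm_bddAbove q hq0 x) (⟨f, hf⟩ : {f : E →L[ℂ] ℂ // ‖f‖ ≤ 1})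

lemma weakNorm_nonneg {q : ℝ} (hq0 : 0 < q) {E : Type*} [NormedAddCommGroup E]
    [NormedSpace ℂ E] {m : ℕ} (x : Fin m → E) : 0 ≤ weakNorm q x := by
  have h := le_weakNorm hq0 x (0 : E →L[ℂ] ℂ) (by simp)
  simpa [Real.zero_rpow hq0.ne', Real.zero_rpow (by positivity : 1/q ≠ 0),
    Real.zero_rpow (by positivity : q⁻¹ ≠ 0)] using h

lemma keyIneq (q : ℝ) (hq : 1 < q) (N m : ℕ) (x : Fin m → EuclideanSpace ℂ (Fin N)) :
    (∑ i, ‖x i‖ ^ q) ^ (1 / q) ≤ (Real.sqrt 3 * Real.sqrt N) * weakNorm q x := by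
  have hq0 : 0 < q := by linarith
  have hq1 : 1 ≤ q := hq.le
  have hW0 : 0 ≤ weakNorm q x := weakNorm_nonneg hq0 x
  by_cases hN : N = 0
  · subst hN
    have hx : ∀ i, ‖x i‖ = 0 := fun i => by simp [EuclideanSpace.norm_eq]
    have : ∑ i, ‖x i‖ ^ q = 0 := by
      refine Finset.sum_eq_zero fun i _ => ?_
      rw [hx i, Real.zero_rpow hq0.ne']
    rw [this, Real.zero_rpow (by positivity : 1/q ≠ 0)]
    positivity
  · have hNpos : (0:ℝ) < N := by positivity
    have hsN : (0:ℝ) < Real.sqrt N := Real.sqrt_pos.2 hNpos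
    set v : (Fin N → Bool) → EuclideanSpace ℂ (Fin N) := fun s =>
      (WithLp.equiv 2 (Fin N → ℂ)).symm fun k => ((sgn (s k) / Real.sqrt N : ℝ) : ℂ) with hv
    have hvapp : ∀ s k, v s k = ((sgn (s k) / Real.sqrt N : ℝ) : ℂ) := fun s k => rfl
    have hvnorm : ∀ s, ‖v s‖ = 1 := by
      intro s
      rw [EuclideanSpace.norm_eq]
      have : ∀ k, ‖v s k‖ ^ 2 = 1 / (N:ℝ) := by
        intro k
        rw [hvapp, Complex.norm_real, Real.norm_eq_abs, abs_div]
        have h1 : |sgn (s k)| = 1 := by cases (s k) <;> simp [sgn]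
        rw [h1, abs_of_nonneg (Real.sqrt_nonneg _), div_pow, one_pow,
          Real.sq_sqrt hNpos.le]
      rw [Finset.sum_congr rfl fun k _ => this k, Finset.sum_const, Finset.card_univ,
        Fintype.card_fin, nsmul_eq_mul, mul_one_div, div_self hNpos.ne', Real.sqrt_one]
    set f : (Fin N → Bool) → (EuclideanSpace ℂ (Fin N) →L[ℂ] ℂ) := fun s =>
      innerSL ℂ (v s) with hfdef
    have hf : ∀ s, ‖f s‖ ≤ 1 := by
      intro s
      rw [hfdef]
      simp only [innerSL_apply_norm]
      rw [hvnorm s]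
    have happly : ∀ s i, (f s) (x i) = ((Real.sqrt N : ℝ) : ℂ)⁻¹ * Ssum (fun k => x i k) s := by
      intro s i
      rw [hfdef]
      simp only [innerSL_apply_apply]
      rw [PiLp.inner_apply]
      unfold Ssum
      rw [Finset.mul_sum]
      refine Finset.sum_congr rfl fun k _ => ?_
      rw [RCLike.inner_apply, hvapp, Complex.conj_ofReal, Complex.ofReal_div]
      ring
    set W := weakNorm q x with hWdef
    have hnormapply : ∀ s i, ‖(f s) (x i)‖ = (Real.sqrt N)⁻¹ * ‖Ssum (fun k => x i k) s‖ := by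
      intro s i
      rw [happly, norm_mul, norm_inv, Complex.norm_real, Real.norm_eq_abs,
        abs_of_nonneg (Real.sqrt_nonneg _)]
    have perS : ∀ s, ∑ i, ‖(f s) (x i)‖ ^ q ≤ W ^ q := by
      intro s
      have hA0 : (0:ℝ) ≤ ∑ i, ‖(f s) (x i)‖ ^ q :=
        Finset.sum_nonneg fun i _ => Real.rpow_nonneg (norm_nonneg _) _
      have h1 := le_weakNorm hq0 x (f s) (hf s)
      calc ∑ i, ‖(f s) (x i)‖ ^ q
          = ((∑ i, ‖(f s) (x i)‖ ^ q) ^ (1/q)) ^ q := by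
            rw [← Real.rpow_mul hA0, one_div_mul_cancel hq0.ne', Real.rpow_one]
        _ ≤ W ^ q := Real.rpow_le_rpow (Real.rpow_nonneg hA0 _) h1 hq0.le
    have perI : ∀ i, ‖x i‖ ^ q ≤
        Real.sqrt 3 / 2 ^ N * ∑ s : Fin N → Bool,
          (Real.sqrt N) ^ q * ‖(f s) (x i)‖ ^ q := by
      intro i
      have hkh := khintchine hq1 (fun k => x i k)
      have hB0 : (0:ℝ) ≤ ∑ k, Complex.normSq (x i k) :=
        Finset.sum_nonneg fun k _ => Complex.normSq_nonneg _
      have hL : ‖x i‖ ^ q = (∑ k, Complex.normSq (x i k)) ^ (q/2) := by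
        rw [EuclideanSpace.norm_eq]
        rw [show ∑ k, ‖x i k‖^2 = ∑ k, Complex.normSq (x i k) from
          Finset.sum_congr rfl fun k _ => by rw [Complex.sq_norm]]
        rw [Real.sqrt_eq_rpow, ← Real.rpow_mul hB0]
        congr 1
        ring
      have hR : ∀ s, Complex.normSq (Ssum (fun k => x i k) s) ^ (q/2)
          = (Real.sqrt N) ^ q * ‖(f s) (x i)‖ ^ q := by
        intro s
        have hS : ‖Ssum (fun k => x i k) s‖ = Real.sqrt N * ‖(f s) (x i)‖ := by
          rw [hnormapply s i, ← mul_assoc, mul_inv_cancel₀ hsN.ne', one_mul]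
        have h2 : Complex.normSq (Ssum (fun k => x i k) s) =
            ‖Ssum (fun k => x i k) s‖ ^ (2:ℕ) := by
          rw [Complex.sq_norm]
        rw [h2, ← Real.rpow_natCast _ 2, ← Real.rpow_mul (norm_nonneg _),
          show ((2:ℕ):ℝ) * (q/2) = q by push_cast; ring, hS,
          Real.mul_rpow (Real.sqrt_nonneg _) (norm_nonneg _)]
      rw [hL]
      refine hkh.trans (le_of_eq ?_)
      congr 1
      exact Finset.sum_congr rfl fun s _ => hR s
    have hswap : ∑ i, ∑ s : Fin N → Bool, (Real.sqrt N) ^ q * ‖(f s) (x i)‖ ^ q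
        = (Real.sqrt N) ^ q * ∑ s : Fin N → Bool, ∑ i, ‖(f s) (x i)‖ ^ q := by
      rw [Finset.sum_comm, Finset.mul_sum]
      exact Finset.sum_congr rfl fun s _ => (Finset.mul_sum _ _ _).symm
    have h2N : (0:ℝ) < 2 ^ N := by positivity
    have hsum : ∑ i, ‖x i‖ ^ q ≤ Real.sqrt 3 * (Real.sqrt N) ^ q * W ^ q := by
      calc ∑ i, ‖x i‖ ^ q
          ≤ ∑ i, Real.sqrt 3 / 2 ^ N * ∑ s : Fin N → Bool,
              (Real.sqrt N) ^ q * ‖(f s) (x i)‖ ^ q :=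
            Finset.sum_le_sum fun i _ => perI i
        _ = Real.sqrt 3 / 2 ^ N * ((Real.sqrt N) ^ q *
              ∑ s : Fin N → Bool, ∑ i, ‖(f s) (x i)‖ ^ q) := by
            rw [← Finset.mul_sum, hswap]
        _ ≤ Real.sqrt 3 / 2 ^ N * ((Real.sqrt N) ^ q * ∑ s : Fin N → Bool, W ^ q) := by
            refine mul_le_mul_of_nonneg_left (mul_le_mul_of_nonneg_left ?_
              (Real.rpow_nonneg (Real.sqrt_nonneg _) _)) (by positivity)
            exact Finset.sum_le_sum fun s _ => perS s
        _ = Real.sqrt 3 * (Real.sqrt N) ^ q * W ^ q := by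
            rw [Finset.sum_const, Finset.card_univ, Fintype.card_fun, Fintype.card_bool,
              Fintype.card_fin, nsmul_eq_mul]
            push_cast
            field_simp
    have hL0 : (0:ℝ) ≤ ∑ i, ‖x i‖ ^ q :=
      Finset.sum_nonneg fun i _ => Real.rpow_nonneg (norm_nonneg _) _
    have hfinal := Real.rpow_le_rpow hL0 hsum (by positivity : (0:ℝ) ≤ 1/q)
    refine hfinal.trans ?_
    have h3q : (Real.sqrt 3) ^ ((1:ℝ)/q) ≤ Real.sqrt 3 := by
      nth_rewrite 2 [← Real.rpow_one (Real.sqrt 3)]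
      refine Real.rpow_le_rpow_of_exponent_le ?_ (by rw [div_le_one hq0]; linarith)
      rw [show (1:ℝ) = Real.sqrt 1 by simp]
      exact Real.sqrt_le_sqrt (by norm_num)
    calc (Real.sqrt 3 * (Real.sqrt N) ^ q * W ^ q) ^ ((1:ℝ)/q)
        = (Real.sqrt 3) ^ ((1:ℝ)/q) * (((Real.sqrt N) ^ q) ^ ((1:ℝ)/q) *
            (W ^ q) ^ ((1:ℝ)/q)) := by
          rw [mul_assoc, Real.mul_rpow (Real.sqrt_nonneg _)
            (mul_nonneg (Real.rpow_nonneg (Real.sqrt_nonneg _) _) (Real.rpow_nonneg hW0 _)),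
            Real.mul_rpow (Real.rpow_nonneg (Real.sqrt_nonneg _) _) (Real.rpow_nonneg hW0 _)]
      _ = (Real.sqrt 3) ^ ((1:ℝ)/q) * (Real.sqrt N * W) := by
          rw [← Real.rpow_mul (Real.sqrt_nonneg _), ← Real.rpow_mul hW0,
            mul_one_div_cancel hq0.ne', Real.rpow_one, Real.rpow_one]
      _ ≤ Real.sqrt 3 * (Real.sqrt N * W) :=
          mul_le_mul_of_nonneg_right h3q (mul_nonneg (Real.sqrt_nonneg _) hW0)
      _ = Real.sqrt 3 * Real.sqrt N * W := by ring

/-- For `q ∈ (1, ∞)`, there is `C_q > 0` with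
`π_q(id_{ℓ²_N}) ≤ C_q √N` for all `N`. -/
theorem summingNorm_id_euclidean_le (q : ℝ) (hq : 1 < q) :
    ∃ C : ℝ, 0 < C ∧ ∀ N : ℕ,
      summingNorm q (ContinuousLinearMap.id ℂ (EuclideanSpace ℂ (Fin N)))
        ≤ C * Real.sqrt N := by
  refine ⟨Real.sqrt 3, by positivity, fun N => ?_⟩
  unfold summingNorm
  refine csInf_le ⟨0, fun K hK => hK.1⟩ ?_
  refine ⟨by positivity, fun m x => ?_⟩
  simp only [ContinuousLinearMap.id_apply]
  exact keyIneq q hq N m x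
end

section
/- Let H be a finite-dimensional Hilbert space with orthonormal basis (e_λ)_{λ∈Λ}, |Λ| = d. If ξ ∈ H ⊗₂ H is a unit vector which, viewed as a Hilbert–Schmidt operator on H, has rank at most r, and ζ₁ = d^{−1/2} ∑_{λ∈Λ} e_λ ⊗ e_λ, then for every scalar α, d^{1/2} ‖ξ − α ζ₁‖ ≥ |α| d^{1/2} − r^{1/2}. -/
/-- The Frobenius (Hilbert–Schmidt) norm of a matrix. -/
noncomputable def frobNorm {Λ : Type*} [Fintype Λ] (A : Matrix Λ Λ ℂ) : ℝ :=
  Real.sqrt (∑ i, ∑ j, ‖A i j‖ ^ 2)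


open Matrix in
/-- Cauchy–Schwarz for the Frobenius inner product. -/
lemma frob_cs {Λ : Type*} [Fintype Λ] (A B : Matrix Λ Λ ℂ) :
    ‖∑ i, ∑ j, (starRingEnd ℂ) (A i j) * B i j‖ ≤
      Real.sqrt (∑ i, ∑ j, ‖A i j‖ ^ 2) * Real.sqrt (∑ i, ∑ j, ‖B i j‖ ^ 2) := by
  set x : EuclideanSpace ℂ (Λ × Λ) := (WithLp.equiv 2 _).symm (fun ij => A ij.1 ij.2)
  set y : EuclideanSpace ℂ (Λ × Λ) := (WithLp.equiv 2 _).symm (fun ij => B ij.1 ij.2)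
  have h1 : (inner ℂ x y : ℂ) = ∑ i, ∑ j, (starRingEnd ℂ) (A i j) * B i j := by
    simp [PiLp.inner_apply, x, y, Fintype.sum_prod_type, RCLike.inner_apply, mul_comm]
  have h2 : ‖x‖ = Real.sqrt (∑ i, ∑ j, ‖A i j‖ ^ 2) := by
    rw [EuclideanSpace.norm_eq]
    congr 1
    simp [x, y, Fintype.sum_prod_type]
  have h3 : ‖y‖ = Real.sqrt (∑ i, ∑ j, ‖B i j‖ ^ 2) := by
    rw [EuclideanSpace.norm_eq]
    congr 1
    simp [x, y, Fintype.sum_prod_type]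
  rw [← h1, ← h2, ← h3]
  exact norm_inner_le_norm x y

open Matrix in
lemma trace_le_sqrt_rank {Λ : Type*} [Fintype Λ] [DecidableEq Λ] (ξ : Matrix Λ Λ ℂ) :
    ‖ξ.trace‖ ≤ Real.sqrt ξ.rank * frobNorm ξ := by
  classical
  set E := EuclideanSpace ℂ Λ
  set f : E →ₗ[ℂ] E := Matrix.toEuclideanLin ξ with hf
  set K : Submodule ℂ E := LinearMap.range f with hK
  set P : E →L[ℂ] E := K.subtypeL ∘L K.orthogonalProjectionOnto with hP
  set p : Matrix Λ Λ ℂ := Matrix.toEuclideanLin.symm (P : E →ₗ[ℂ] E) with hp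
  have hpe : Matrix.toEuclideanLin p = (P : E →ₗ[ℂ] E) := by
    simp [hp]
  -- P is a projection onto K
  have hproj : LinearMap.IsProj K (P : E →ₗ[ℂ] E) := by
    constructor
    · intro x; exact (K.orthogonalProjectionOnto x).2
    · intro x hx
      simp [hP, Submodule.orthogonalProjectionOnto_mem_subspace_eq_self ⟨x, hx⟩]
  -- P fixes the range of f
  have hfix : ∀ v : E, P (f v) = f v := fun v => hproj.2 _ ⟨v, rfl⟩
  -- p is hermitian
  have hherm : p.IsHermitian := by
    rw [Matrix.isHermitian_iff_isSymmetric, hpe]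
    exact Submodule.starProjection_isSymmetric (K := K)
  -- p * ξ = ξ
  have hmul : p * ξ = ξ := by
    apply Matrix.toEuclideanLin.injective
    ext v : 1
    have : Matrix.toEuclideanLin (p * ξ) v = Matrix.toEuclideanLin p (Matrix.toEuclideanLin ξ v) := by
      simp [Matrix.toEuclideanLin_apply, Matrix.mulVec_mulVec]
    rw [this, hpe]
    exact hfix v
  -- p is idempotent
  have hmul_pp : p * p = p := by
    apply Matrix.toEuclideanLin.injective
    ext v : 1
    have : Matrix.toEuclideanLin (p * p) v = Matrix.toEuclideanLin p (Matrix.toEuclideanLin p v) := by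
      simp [Matrix.toEuclideanLin_apply, Matrix.mulVec_mulVec]
    rw [this, hpe]
    exact hproj.2 _ (hproj.1 v)
  -- trace of p is rank of ξ
  have hrank : ξ.rank = Module.finrank ℂ K := by
    rw [hK, hf, Matrix.toEuclideanLin_eq_toLin]
    exact ξ.rank_eq_finrank_range_toLin _ _
  have htr : p.trace = (ξ.rank : ℂ) := by
    have h1 : LinearMap.trace ℂ E (P : E →ₗ[ℂ] E) = (Module.finrank ℂ K : ℂ) := hproj.trace
    have h2 : LinearMap.trace ℂ E (Matrix.toEuclideanLin p) = p.trace := by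
      rw [Matrix.toEuclideanLin_eq_toLin, LinearMap.trace_eq_matrix_trace ℂ (PiLp.basisFun 2 ℂ Λ),
        LinearMap.toMatrix_toLin]
    rw [hpe] at h2
    rw [← h2, h1, hrank]
  -- frobNorm p = sqrt (rank)
  have hfrobp : frobNorm p = Real.sqrt ξ.rank := by
    have key : ((∑ i, ∑ j, ‖p i j‖ ^ 2 : ℝ) : ℂ) = (pᴴ * p).trace := by
      rw [Matrix.trace]
      push_cast
      rw [Finset.sum_comm]
      simp only [Matrix.diag_apply, Matrix.mul_apply, Matrix.conjTranspose_apply]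
      refine Finset.sum_congr rfl fun i _ => Finset.sum_congr rfl fun j _ => ?_
      rw [mul_comm, RCLike.star_def, RCLike.mul_conj]
      norm_cast
    rw [hherm.eq, hmul_pp] at key
    rw [htr] at key
    have : (∑ i, ∑ j, ‖p i j‖ ^ 2) = (ξ.rank : ℝ) := by
      exact_mod_cast key
    rw [frobNorm, this]
  -- conclude
  calc ‖ξ.trace‖ = ‖∑ i, ∑ j, (starRingEnd ℂ) (p i j) * ξ i j‖ := by
        congr 1
        conv_lhs => rw [← hmul]
        rw [Matrix.trace]
        rw [Finset.sum_comm]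
        simp only [Matrix.diag_apply, Matrix.mul_apply]
        refine Finset.sum_congr rfl fun i _ => Finset.sum_congr rfl fun j _ => ?_
        rw [← hherm.apply i j]
        simp [Matrix.conjTranspose_apply]
    _ ≤ frobNorm p * frobNorm ξ := frob_cs p ξ
    _ = Real.sqrt ξ.rank * frobNorm ξ := by rw [hfrobp]

open Matrix in
lemma trace_le_sqrt_card {Λ : Type*} [Fintype Λ] [DecidableEq Λ] (M : Matrix Λ Λ ℂ) :
    ‖M.trace‖ ≤ Real.sqrt (Fintype.card Λ) * frobNorm M := by
  have h := frob_cs (1 : Matrix Λ Λ ℂ) M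
  have h1 : ∑ i, ∑ j, (starRingEnd ℂ) ((1 : Matrix Λ Λ ℂ) i j) * M i j = M.trace := by
    simp [Matrix.one_apply, apply_ite, Matrix.trace, Matrix.diag]
  have h2 : (∑ i, ∑ j, ‖(1 : Matrix Λ Λ ℂ) i j‖ ^ 2) = (Fintype.card Λ : ℝ) := by
    simp [Matrix.one_apply, apply_ite]
  rw [h1, h2] at h
  exact h

/-- Let `H` be a `d`-dimensional Hilbert space with orthonormal
basis indexed by `Λ`, and identify `H ⊗₂ H` with the Hilbert–Schmidt operators
on `H`, i.e. with matrices over `Λ`.  If `ξ` is a unit vector of rank at most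
`r` and `ζ₁ = d^{−1/2} ∑_λ e_λ ⊗ e_λ` (the matrix `d^{−1/2} · 1`), then for
every scalar `α`, `√d ‖ξ − α ζ₁‖ ≥ |α| √d − √r`. -/
theorem dist_to_scaled_identity (Λ : Type*) [Fintype Λ] [DecidableEq Λ]
    (ξ : Matrix Λ Λ ℂ) (hnorm : frobNorm ξ = 1) (r : ℕ) (hrank : ξ.rank ≤ r)
    (α : ℂ) :
    Real.sqrt (Fintype.card Λ) *
        frobNorm (ξ - α • ((Real.sqrt (Fintype.card Λ) : ℂ)⁻¹ • (1 : Matrix Λ Λ ℂ)))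
      ≥ ‖α‖ * Real.sqrt (Fintype.card Λ) - Real.sqrt r := by
  set d := Fintype.card Λ with hd
  set D := Real.sqrt d with hD
  rcases Nat.eq_zero_or_pos d with h0 | hpos
  · have : D = 0 := by rw [hD, h0]; simp
    rw [this]
    simp only [mul_zero, zero_mul, ge_iff_le, zero_mul]
    have : (0:ℝ) ≤ Real.sqrt r := Real.sqrt_nonneg _
    linarith
  · have hDpos : 0 < D := Real.sqrt_pos.mpr (by exact_mod_cast hpos)
    set M := ξ - α • (((D:ℝ) : ℂ)⁻¹ • (1 : Matrix Λ Λ ℂ)) with hM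
    have htrM : M.trace = ξ.trace - α * ((D:ℝ):ℂ)⁻¹ * d := by
      rw [hM]
      rw [Matrix.trace_sub, Matrix.trace_smul, Matrix.trace_smul, Matrix.trace_one]
      simp [hd]
      ring
    have hnormc : ‖α * ((D:ℝ):ℂ)⁻¹ * (d:ℂ)‖ = ‖α‖ * D := by
      rw [norm_mul, norm_mul, norm_inv]
      have : ‖((D:ℝ):ℂ)‖ = D := by
        simp [Complex.norm_real, abs_of_pos hDpos]
      rw [this]
      have hdc : ‖(d:ℂ)‖ = (d:ℝ) := by simp
      rw [hdc]
      have hD2 : (d:ℝ) = D * D := by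
        rw [hD, Real.mul_self_sqrt (by positivity)]
      rw [hD2]
      field_simp
    have key : ‖α * ((D:ℝ):ℂ)⁻¹ * (d:ℂ)‖ ≤ Real.sqrt r + D * frobNorm M := by
      have e : α * ((D:ℝ):ℂ)⁻¹ * (d:ℂ) = ξ.trace - M.trace := by
        rw [htrM]; ring
      rw [e]
      have b1 : ‖ξ.trace‖ ≤ Real.sqrt r := by
        calc ‖ξ.trace‖ ≤ Real.sqrt ξ.rank * frobNorm ξ := trace_le_sqrt_rank ξ
          _ = Real.sqrt ξ.rank := by rw [hnorm, mul_one]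
          _ ≤ Real.sqrt r := Real.sqrt_le_sqrt (by exact_mod_cast hrank)
      have b2 : ‖M.trace‖ ≤ D * frobNorm M := trace_le_sqrt_card M
      calc ‖ξ.trace - M.trace‖ ≤ ‖ξ.trace‖ + ‖M.trace‖ := norm_sub_le _ _
        _ ≤ Real.sqrt r + D * frobNorm M := add_le_add b1 b2
    rw [hnormc] at key
    linarith
end

section
/- Let E be a Banach space, let a, b be bounded operators on ℓ²(ℕ) ⊕ E, and let P ∈ 𝓑(ℓ²(ℕ) ⊕ E) be the orthogonal-type projection onto the span of the first d coordinates of the ℓ² summand. Then ∑_{n=1}^∞ ‖P a e_n‖ ‖P* b* e_n*‖ ≤ d ‖a‖ ‖b‖, where (e_n) is the canonical basis of the ℓ² summand and (e_n*) the corresponding coordinate functionals. -/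
open scoped ComplexConjugate ENNReal

private lemma rpow_two_toReal' (x : ℝ) : x ^ (2 : ℝ≥0∞).toReal = x ^ 2 := by
  rw [show (2 : ℝ≥0∞).toReal = ((2 : ℕ) : ℝ) by norm_num, Real.rpow_natCast]

private lemma norm_prod_zero' {E : Type*} [NormedAddCommGroup E]
    (x : lp (fun _ : ℕ => ℂ) 2) : ‖(x, (0 : E))‖ = ‖x‖ := by
  simp [Prod.norm_def]

private lemma norm_sum_single_sq (c : ℕ → ℂ) (F : Finset ℕ) :
    ‖∑ n ∈ F, lp.single 2 n (c n)‖ ^ 2 = ∑ n ∈ F, ‖c n‖ ^ 2 := by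
  have h := lp.norm_sum_single (p := 2) (by norm_num) c F
  simpa [rpow_two_toReal'] using h

private lemma sum_coord_sq_le (f : lp (fun _ : ℕ => ℂ) 2) (F : Finset ℕ) :
    ∑ n ∈ F, ‖(f : ∀ _ : ℕ, ℂ) n‖ ^ 2 ≤ ‖f‖ ^ 2 := by
  have h := lp.hasSum_norm (p := 2) (by norm_num) f
  simp only [rpow_two_toReal'] at h
  exact sum_le_hasSum F (fun i _ => by positivity) h

private lemma single_eq_smul (n : ℕ) (w : ℂ) :
    (lp.single 2 n w : lp (fun _ : ℕ => ℂ) 2) = w • lp.single 2 n 1 := by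
  apply lp.ext
  funext j
  rw [lp.coeFn_smul, Pi.smul_apply]
  by_cases h : j = n
  · subst h; rw [lp.single_apply_self, lp.single_apply_self]; simp
  · rw [lp.single_apply_ne _ _ _ h, lp.single_apply_ne _ _ _ h]; simp

private lemma functional_bessel {E : Type*} [NormedAddCommGroup E] [NormedSpace ℂ E]
    (φ : (lp (fun _ : ℕ => ℂ) 2 × E) →L[ℂ] ℂ) (F : Finset ℕ) :
    ∑ n ∈ F, ‖φ (lp.single 2 n 1, 0)‖ ^ 2 ≤ ‖φ‖ ^ 2 := by
  set c : ℕ → ℂ := fun n => φ (lp.single 2 n 1, 0) with hc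
  set S : ℝ := ∑ n ∈ F, ‖c n‖ ^ 2 with hS
  have hS0 : 0 ≤ S := Finset.sum_nonneg fun n _ => by positivity
  set z : lp (fun _ : ℕ => ℂ) 2 := ∑ n ∈ F, lp.single 2 n (conj (c n)) with hz
  have hzn : ‖z‖ ^ 2 = S := by
    rw [hz, norm_sum_single_sq]
    simp [hS]
  have hzz : ((z, (0 : E)) : lp (fun _ : ℕ => ℂ) 2 × E)
      = ∑ n ∈ F, (conj (c n)) • ((lp.single 2 n 1 : lp (fun _ : ℕ => ℂ) 2), (0 : E)) := by
    refine Prod.ext ?_ ?_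
    · rw [Prod.fst_sum]
      simp only [Prod.smul_mk]
      exact Finset.sum_congr rfl fun n _ => single_eq_smul n (conj (c n))
    · rw [Prod.snd_sum]
      simp
  have hφz : φ (z, (0 : E)) = (S : ℂ) := by
    rw [hzz, map_sum]
    simp only [map_smul, smul_eq_mul, ← hc]
    rw [hS]
    push_cast
    exact Finset.sum_congr rfl fun n _ => by
      rw [show φ (lp.single 2 n 1, (0:E)) = c n from rfl, RCLike.conj_mul]
      norm_cast
  have hnormφz : ‖φ (z, (0 : E))‖ = S := by
    rw [hφz, Complex.norm_real, Real.norm_of_nonneg hS0]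
  have hineq : S ≤ ‖φ‖ * ‖z‖ := by
    rw [← hnormφz]
    calc ‖φ (z, (0 : E))‖ ≤ ‖φ‖ * ‖(z, (0 : E))‖ := φ.le_opNorm _
      _ = ‖φ‖ * ‖z‖ := by rw [norm_prod_zero']
  rcases eq_or_lt_of_le hS0 with h0 | h0
  · rw [← h0]; positivity
  · have hznpos : 0 < ‖z‖ := by
      by_contra hcon
      push_neg at hcon
      have : ‖z‖ = 0 := le_antisymm hcon (norm_nonneg _)
      rw [← hzn, this] at h0; simp at h0
    have hzφ : ‖z‖ ≤ ‖φ‖ := by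
      have : ‖z‖ * ‖z‖ ≤ ‖φ‖ * ‖z‖ := by
        calc ‖z‖ * ‖z‖ = ‖z‖ ^ 2 := (sq ‖z‖).symm
          _ = S := hzn
          _ ≤ ‖φ‖ * ‖z‖ := hineq
      exact le_of_mul_le_mul_right this hznpos
    calc (∑ n ∈ F, ‖c n‖ ^ 2) = S := hS.symm
      _ = ‖z‖ ^ 2 := hzn.symm
      _ ≤ ‖φ‖ ^ 2 := pow_le_pow_left₀ (norm_nonneg _) hzφ 2

/-- Let `E` be a Banach space, `a, b` bounded operators on
`ℓ²(ℕ) ⊕ E`, and `P` the canonical projection onto the span of the first `d`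
coordinates of the `ℓ²` summand.  Then
`∑ₙ ‖P a eₙ‖ ‖P* b* eₙ*‖ ≤ d ‖a‖ ‖b‖`, where `(eₙ)` is the canonical basis of
the `ℓ²` summand, `(eₙ*)` are the corresponding coordinate functionals, and
`P* b* eₙ* = eₙ* ∘ b ∘ P`.  (The sum of nonnegative terms is expressed via
arbitrary finite partial sums.) -/
theorem ozawa_hilbert_estimate (E : Type*) [NormedAddCommGroup E]
    [NormedSpace ℂ E] [CompleteSpace E] (d : ℕ)
    (a b : (lp (fun _ : ℕ => ℂ) 2 × E) →L[ℂ] (lp (fun _ : ℕ => ℂ) 2 × E))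
    (P : (lp (fun _ : ℕ => ℂ) 2 × E) →L[ℂ] (lp (fun _ : ℕ => ℂ) 2 × E))
    -- `P` is the projection onto the first `d` coordinates of the `ℓ²` summand:
    (hP : ∀ z : lp (fun _ : ℕ => ℂ) 2 × E, (P z).2 = 0 ∧
      ∀ i : ℕ, ((P z).1 : ∀ _ : ℕ, ℂ) i = if i < d then (z.1 : ∀ _ : ℕ, ℂ) i else 0)
    -- the coordinate functionals `eₙ*` of the `ℓ²` summand:
    (coord : ℕ → (lp (fun _ : ℕ => ℂ) 2 × E) →L[ℂ] ℂ)
    (hcoord : ∀ (n : ℕ) (z : lp (fun _ : ℕ => ℂ) 2 × E),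
      coord n z = (z.1 : ∀ _ : ℕ, ℂ) n) :
    ∀ F : Finset ℕ,
      ∑ n ∈ F, ‖P (a (lp.single 2 n 1, 0))‖ * ‖(coord n).comp (b.comp P)‖
        ≤ d * ‖a‖ * ‖b‖ := by
  intro F
  classical
  have hc1 : ∀ i : ℕ, ‖coord i‖ ≤ 1 := by
    intro i
    refine ContinuousLinearMap.opNorm_le_bound _ zero_le_one fun z => ?_
    rw [hcoord, one_mul]
    calc ‖(z.1 : ∀ _ : ℕ, ℂ) i‖ ≤ ‖z.1‖ := lp.norm_apply_le_norm (by norm_num) z.1 i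
      _ ≤ ‖z‖ := by rw [Prod.norm_def]; exact le_max_left _ _
  have hPfst : ∀ z : lp (fun _ : ℕ => ℂ) 2 × E,
      (P z).1 = ∑ i ∈ Finset.range d, lp.single 2 i ((z.1 : ∀ _ : ℕ, ℂ) i) := by
    intro z
    apply lp.ext
    funext j
    rw [lp.coeFn_sum, Finset.sum_apply, (hP z).2 j]
    by_cases hj : j < d
    · rw [if_pos hj, Finset.sum_eq_single j]
      · rw [lp.single_apply_self]
      · intro i _ hij
        exact lp.single_apply_ne 2 i _ (Ne.symm hij)
      · intro hjF
        exact absurd (Finset.mem_range.mpr hj) hjF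
    · rw [if_neg hj]
      refine (Finset.sum_eq_zero fun i hi => ?_).symm
      have hji : j ≠ i := by
        rintro rfl
        exact hj (Finset.mem_range.mp hi)
      exact lp.single_apply_ne 2 i _ hji
  have hPnorm2 : ∀ w : lp (fun _ : ℕ => ℂ) 2 × E,
      ‖P w‖ ^ 2 = ∑ i ∈ Finset.range d, ‖(w.1 : ∀ _ : ℕ, ℂ) i‖ ^ 2 := by
    intro w
    have h1 : ‖P w‖ = ‖(P w).1‖ := by
      rw [Prod.norm_def, (hP w).1, norm_zero]
      exact max_eq_left (norm_nonneg _)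
    rw [h1, hPfst w, norm_sum_single_sq]
  have hPz : ∀ z : lp (fun _ : ℕ => ℂ) 2 × E,
      P z = ∑ i ∈ Finset.range d,
        ((z.1 : ∀ _ : ℕ, ℂ) i) • ((lp.single 2 i 1 : lp (fun _ : ℕ => ℂ) 2), (0 : E)) := by
    intro z
    refine Prod.ext ?_ ?_
    · rw [hPfst z, Prod.fst_sum]
      simp only [Prod.smul_mk]
      exact Finset.sum_congr rfl fun i _ => single_eq_smul i _
    · rw [(hP z).1, Prod.snd_sum]
      simp
  have hαsum : ∑ n ∈ F, ‖P (a (lp.single 2 n 1, 0))‖ ^ 2 ≤ (d : ℝ) * ‖a‖ ^ 2 := by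
    calc ∑ n ∈ F, ‖P (a (lp.single 2 n 1, 0))‖ ^ 2
        = ∑ n ∈ F, ∑ i ∈ Finset.range d,
            ‖((coord i).comp a) (lp.single 2 n 1, 0)‖ ^ 2 := by
          refine Finset.sum_congr rfl fun n _ => ?_
          rw [hPnorm2]
          refine Finset.sum_congr rfl fun i _ => ?_
          rw [ContinuousLinearMap.comp_apply, hcoord]
      _ = ∑ i ∈ Finset.range d, ∑ n ∈ F,
            ‖((coord i).comp a) (lp.single 2 n 1, 0)‖ ^ 2 := Finset.sum_comm
      _ ≤ ∑ i ∈ Finset.range d, ‖(coord i).comp a‖ ^ 2 :=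
          Finset.sum_le_sum fun i _ => functional_bessel _ F
      _ ≤ ∑ i ∈ Finset.range d, ‖a‖ ^ 2 := by
          refine Finset.sum_le_sum fun i _ => pow_le_pow_left₀ (norm_nonneg _) ?_ 2
          calc ‖(coord i).comp a‖ ≤ ‖coord i‖ * ‖a‖ := ContinuousLinearMap.opNorm_comp_le _ _
            _ ≤ 1 * ‖a‖ := mul_le_mul_of_nonneg_right (hc1 i) (norm_nonneg _)
            _ = ‖a‖ := one_mul _
      _ = (d : ℝ) * ‖a‖ ^ 2 := by rw [Finset.sum_const, Finset.card_range, nsmul_eq_mul]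
  have hnorm_e : ∀ i : ℕ,
      ‖((lp.single 2 i 1 : lp (fun _ : ℕ => ℂ) 2), (0 : E))‖ = 1 := by
    intro i
    rw [norm_prod_zero']
    have h := lp.norm_single (p := 2) (E := fun _ : ℕ => ℂ) (by norm_num) i (1 : ℂ)
    simpa using h
  have hβ : ∀ n, ‖(coord n).comp (b.comp P)‖ ^ 2 ≤
      ∑ i ∈ Finset.range d, ‖coord n (b (lp.single 2 i 1, 0))‖ ^ 2 := by
    intro n
    set T : ℝ := ∑ i ∈ Finset.range d, ‖coord n (b (lp.single 2 i 1, 0))‖ ^ 2 with hT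
    have hT0 : 0 ≤ T := Finset.sum_nonneg fun i _ => by positivity
    have hop : ‖(coord n).comp (b.comp P)‖ ≤ Real.sqrt T := by
      refine ContinuousLinearMap.opNorm_le_bound _ (Real.sqrt_nonneg _) fun z => ?_
      rw [ContinuousLinearMap.comp_apply, ContinuousLinearMap.comp_apply, hPz z]
      simp only [map_sum, map_smul, smul_eq_mul]
      calc ‖∑ i ∈ Finset.range d,
              (z.1 : ∀ _ : ℕ, ℂ) i * coord n (b (lp.single 2 i 1, 0))‖
          ≤ ∑ i ∈ Finset.range d,
              ‖(z.1 : ∀ _ : ℕ, ℂ) i‖ * ‖coord n (b (lp.single 2 i 1, 0))‖ := by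
            refine (norm_sum_le _ _).trans (Finset.sum_le_sum fun i _ => ?_)
            rw [norm_mul]
        _ ≤ Real.sqrt (∑ i ∈ Finset.range d, ‖(z.1 : ∀ _ : ℕ, ℂ) i‖ ^ 2) * Real.sqrt T :=
            Real.sum_mul_le_sqrt_mul_sqrt _ _ _
        _ ≤ ‖z‖ * Real.sqrt T := by
            refine mul_le_mul_of_nonneg_right ?_ (Real.sqrt_nonneg _)
            calc Real.sqrt (∑ i ∈ Finset.range d, ‖(z.1 : ∀ _ : ℕ, ℂ) i‖ ^ 2)
                ≤ Real.sqrt (‖z.1‖ ^ 2) := Real.sqrt_le_sqrt (sum_coord_sq_le z.1 _)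
              _ = ‖z.1‖ := Real.sqrt_sq (norm_nonneg _)
              _ ≤ ‖z‖ := by rw [Prod.norm_def]; exact le_max_left _ _
        _ = Real.sqrt T * ‖z‖ := mul_comm _ _
    calc ‖(coord n).comp (b.comp P)‖ ^ 2 ≤ Real.sqrt T ^ 2 :=
        pow_le_pow_left₀ (norm_nonneg _) hop 2
      _ = T := Real.sq_sqrt hT0
  have hβsum : ∑ n ∈ F, ‖(coord n).comp (b.comp P)‖ ^ 2 ≤ (d : ℝ) * ‖b‖ ^ 2 := by
    calc ∑ n ∈ F, ‖(coord n).comp (b.comp P)‖ ^ 2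
        ≤ ∑ n ∈ F, ∑ i ∈ Finset.range d, ‖coord n (b (lp.single 2 i 1, 0))‖ ^ 2 :=
          Finset.sum_le_sum fun n _ => hβ n
      _ = ∑ i ∈ Finset.range d, ∑ n ∈ F, ‖coord n (b (lp.single 2 i 1, 0))‖ ^ 2 :=
          Finset.sum_comm
      _ ≤ ∑ i ∈ Finset.range d, ‖b‖ ^ 2 := by
          refine Finset.sum_le_sum fun i _ => ?_
          calc ∑ n ∈ F, ‖coord n (b (lp.single 2 i 1, 0))‖ ^ 2
              = ∑ n ∈ F, ‖((b (lp.single 2 i 1, 0)).1 : ∀ _ : ℕ, ℂ) n‖ ^ 2 :=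
                Finset.sum_congr rfl fun n _ => by rw [hcoord]
            _ ≤ ‖(b (lp.single 2 i 1, 0)).1‖ ^ 2 := sum_coord_sq_le _ F
            _ ≤ ‖b (lp.single 2 i 1, 0)‖ ^ 2 := by
                refine pow_le_pow_left₀ (norm_nonneg _) ?_ 2
                rw [Prod.norm_def]; exact le_max_left _ _
            _ ≤ ‖b‖ ^ 2 := by
                refine pow_le_pow_left₀ (norm_nonneg _) ?_ 2
                calc ‖b (lp.single 2 i 1, 0)‖
                    ≤ ‖b‖ * ‖((lp.single 2 i 1 : lp (fun _ : ℕ => ℂ) 2), (0 : E))‖ :=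
                      b.le_opNorm _
                  _ = ‖b‖ := by rw [hnorm_e i, mul_one]
      _ = (d : ℝ) * ‖b‖ ^ 2 := by rw [Finset.sum_const, Finset.card_range, nsmul_eq_mul]
  have hCS := Finset.sum_mul_sq_le_sq_mul_sq F
      (fun n => ‖P (a (lp.single 2 n 1, 0))‖) (fun n => ‖(coord n).comp (b.comp P)‖)
  have hfin : (∑ n ∈ F, ‖P (a (lp.single 2 n 1, 0))‖ * ‖(coord n).comp (b.comp P)‖) ^ 2
      ≤ ((d : ℝ) * ‖a‖ * ‖b‖) ^ 2 := by
    calc (∑ n ∈ F, ‖P (a (lp.single 2 n 1, 0))‖ * ‖(coord n).comp (b.comp P)‖) ^ 2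
        ≤ (∑ n ∈ F, ‖P (a (lp.single 2 n 1, 0))‖ ^ 2) *
            ∑ n ∈ F, ‖(coord n).comp (b.comp P)‖ ^ 2 := hCS
      _ ≤ ((d : ℝ) * ‖a‖ ^ 2) * ((d : ℝ) * ‖b‖ ^ 2) :=
          mul_le_mul hαsum hβsum (Finset.sum_nonneg fun n _ => by positivity) (by positivity)
      _ = ((d : ℝ) * ‖a‖ * ‖b‖) ^ 2 := by ring
  have hnn : 0 ≤ ∑ n ∈ F, ‖P (a (lp.single 2 n 1, 0))‖ * ‖(coord n).comp (b.comp P)‖ :=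
    Finset.sum_nonneg fun n _ => mul_nonneg (norm_nonneg _) (norm_nonneg _)
  calc ∑ n ∈ F, ‖P (a (lp.single 2 n 1, 0))‖ * ‖(coord n).comp (b.comp P)‖
      = Real.sqrt ((∑ n ∈ F,
          ‖P (a (lp.single 2 n 1, 0))‖ * ‖(coord n).comp (b.comp P)‖) ^ 2) :=
        (Real.sqrt_sq hnn).symm
    _ ≤ Real.sqrt (((d : ℝ) * ‖a‖ * ‖b‖) ^ 2) := Real.sqrt_le_sqrt hfin
    _ = (d : ℝ) * ‖a‖ * ‖b‖ := Real.sqrt_sq (by positivity)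
end
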